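/- For a complete simple game with two types of voters, any failure of 2-trade robustness can be converted to a failure of 2-invariant trade robustness: if there exist two minimal winning coalition types (a_1,b_1), (a_2,b_2) and two losing types (u_1,v_1), (u_2,v_2) with a_1 + a_2 = u_1 + u_2 and b_1 + b_2 = v_1 + v_2, then there exist two shift-minimal winning types and two losing types with the same equal-sum property. -/
import Mathlib


/-- For a complete simple game with two types of voters, a failure of `2`-trade
robustness with minimal winning coalition types can be converted into one with
shift-minimal winning coalition types. -/
theorem stmt10 (n1 n2 : ℕ) (Win : ℕ → ℕ → Prop)
    (hupset : ∀ x y x' y' : ℕ, x ≤ n1 → y ≤ n2 → x' ≤ x → x' + y' ≤ x + y →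
      Win x' y' → Win x y)
    (MinWin : ℕ → ℕ → Prop)
    (hMinWin : ∀ x y : ℕ, MinWin x y ↔ Win x y ∧
      (1 ≤ x → ¬ Win (x - 1) y) ∧ (1 ≤ y → ¬ Win x (y - 1)))
    (ShiftMinWin : ℕ → ℕ → Prop)
    (hShiftMinWin : ∀ x y : ℕ, ShiftMinWin x y ↔ Win x y ∧
      ∀ x' y' : ℕ, y' ≤ n2 → x' ≤ x → x' + y' ≤ x + y →
        (x' < x ∨ x' + y' < x + y) → ¬ Win x' y')
    (a1 b1 a2 b2 u1 v1 u2 v2 : ℕ)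
    (hb : a1 ≤ n1 ∧ b1 ≤ n2 ∧ a2 ≤ n1 ∧ b2 ≤ n2 ∧
      u1 ≤ n1 ∧ v1 ≤ n2 ∧ u2 ≤ n1 ∧ v2 ≤ n2)
    (hw1 : MinWin a1 b1) (hw2 : MinWin a2 b2)
    (hl1 : ¬ Win u1 v1) (hl2 : ¬ Win u2 v2)
    (hsum1 : a1 + a2 = u1 + u2) (hsum2 : b1 + b2 = v1 + v2) :
    ∃ p1 q1 p2 q2 s1 t1 s2 t2 : ℕ,
      p1 ≤ n1 ∧ q1 ≤ n2 ∧ p2 ≤ n1 ∧ q2 ≤ n2 ∧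
      s1 ≤ n1 ∧ t1 ≤ n2 ∧ s2 ≤ n1 ∧ t2 ≤ n2 ∧
      ShiftMinWin p1 q1 ∧ ShiftMinWin p2 q2 ∧
      ¬ Win s1 t1 ∧ ¬ Win s2 t2 ∧
      p1 + p2 = s1 + s2 ∧ q1 + q2 = t1 + t2 := by
  classical
  obtain ⟨hba1, hbb1, hba2, hbb2, hbu1, hbv1, hbu2, hbv2⟩ := hb
  have hlose : ∀ x y x' y' : ℕ, x ≤ n1 → y ≤ n2 → x' ≤ x → x' + y' ≤ x + y →
      ¬ Win x y → ¬ Win x' y' := fun x y x' y' h1 h2 h3 h4 h5 h6 =>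
    h5 (hupset x y x' y' h1 h2 h3 h4 h6)
  -- decrement the first coordinate sum of a losing pair
  have decS : ∀ s1 t1 s2 t2 : ℕ, s1 ≤ n1 → t1 ≤ n2 → s2 ≤ n1 → t2 ≤ n2 →
      ¬ Win s1 t1 → ¬ Win s2 t2 → 1 ≤ s1 + s2 →
      ∃ s1' s2', s1' ≤ n1 ∧ s2' ≤ n1 ∧ ¬ Win s1' t1 ∧ ¬ Win s2' t2 ∧
        s1' + s2' + 1 = s1 + s2 := by
    intro s1 t1 s2 t2 h1 h2 h3 h4 hL1 hL2 hpos
    rcases Nat.eq_zero_or_pos s1 with h0 | h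
    · exact ⟨s1, s2 - 1, h1, by omega, hL1,
        hlose s2 t2 (s2 - 1) t2 h3 h4 (by omega) (by omega) hL2, by omega⟩
    · exact ⟨s1 - 1, s2, by omega, h3,
        hlose s1 t1 (s1 - 1) t1 h1 h2 (by omega) (by omega) hL1, hL2, by omega⟩
  -- decrement the second coordinate sum of a losing pair
  have decT : ∀ s1 t1 s2 t2 : ℕ, s1 ≤ n1 → t1 ≤ n2 → s2 ≤ n1 → t2 ≤ n2 →
      ¬ Win s1 t1 → ¬ Win s2 t2 → 1 ≤ t1 + t2 →
      ∃ t1' t2', t1' ≤ n2 ∧ t2' ≤ n2 ∧ ¬ Win s1 t1' ∧ ¬ Win s2 t2' ∧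
        t1' + t2' + 1 = t1 + t2 := by
    intro s1 t1 s2 t2 h1 h2 h3 h4 hL1 hL2 hpos
    rcases Nat.eq_zero_or_pos t1 with h0 | h
    · exact ⟨t1, t2 - 1, h2, by omega, hL1,
        hlose s2 t2 s2 (t2 - 1) h3 h4 le_rfl (by omega) hL2, by omega⟩
    · exact ⟨t1 - 1, t2, by omega, h4,
        hlose s1 t1 s1 (t1 - 1) h1 h2 le_rfl (by omega) hL1, hL2, by omega⟩
  -- shift one unit from the first coordinate sum to the second
  have shiftL : ∀ s1 t1 s2 t2 : ℕ, s1 ≤ n1 → t1 ≤ n2 → s2 ≤ n1 → t2 ≤ n2 →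
      ¬ Win s1 t1 → ¬ Win s2 t2 → 1 ≤ s1 + s2 → t1 + t2 + 1 ≤ 2 * n2 →
      ∃ s1' t1' s2' t2', s1' ≤ n1 ∧ t1' ≤ n2 ∧ s2' ≤ n1 ∧ t2' ≤ n2 ∧
        ¬ Win s1' t1' ∧ ¬ Win s2' t2' ∧
        s1' + s2' + 1 = s1 + s2 ∧ t1' + t2' = t1 + t2 + 1 := by
    intro s1 t1 s2 t2 h1 h2 h3 h4 hL1 hL2 hpos hT
    by_cases c1 : 1 ≤ s1 ∧ t1 < n2
    · exact ⟨s1 - 1, t1 + 1, s2, t2, by omega, by omega, h3, h4,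
        hlose s1 t1 (s1 - 1) (t1 + 1) h1 h2 (by omega) (by omega) hL1, hL2,
        by omega, by omega⟩
    by_cases c2 : 1 ≤ s2 ∧ t2 < n2
    · exact ⟨s1, t1, s2 - 1, t2 + 1, h1, h2, by omega, by omega, hL1,
        hlose s2 t2 (s2 - 1) (t2 + 1) h3 h4 (by omega) (by omega) hL2,
        by omega, by omega⟩
    push_neg at c1 c2
    rcases Nat.eq_zero_or_pos s1 with h0 | hs1
    · have hs2 : 1 ≤ s2 := by omega
      have ht2 : t2 = n2 := le_antisymm h4 (c2 hs2)
      exact ⟨s1, t1 + 1, s2 - 1, t2, h1, by omega, by omega, h4,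
        hlose s2 t2 s1 (t1 + 1) h3 h4 (by omega) (by omega) hL2,
        hlose s2 t2 (s2 - 1) t2 h3 h4 (by omega) (by omega) hL2,
        by omega, by omega⟩
    · have ht1 : t1 = n2 := le_antisymm h2 (c1 hs1)
      have ht2 : t2 < n2 := by omega
      have hs2 : s2 = 0 := by
        by_contra hc
        exact absurd ht2 (not_lt.mpr (c2 (by omega)))
      exact ⟨s1 - 1, t1, s2, t2 + 1, by omega, h2, h3, by omega,
        hlose s1 t1 (s1 - 1) t1 h1 h2 (by omega) (by omega) hL1,
        hlose s1 t1 s2 (t2 + 1) h1 h2 (by omega) (by omega) hL1,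
        by omega, by omega⟩
  suffices H : ∀ M : ℕ, ∀ p1 q1 p2 q2 s1 t1 s2 t2 : ℕ,
      2 * (p1 + p2) + (q1 + q2) ≤ M →
      p1 ≤ n1 → q1 ≤ n2 → p2 ≤ n1 → q2 ≤ n2 →
      s1 ≤ n1 → t1 ≤ n2 → s2 ≤ n1 → t2 ≤ n2 →
      Win p1 q1 → Win p2 q2 → ¬ Win s1 t1 → ¬ Win s2 t2 →
      p1 + p2 = s1 + s2 → q1 + q2 = t1 + t2 →
      ∃ p1 q1 p2 q2 s1 t1 s2 t2 : ℕ,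
        p1 ≤ n1 ∧ q1 ≤ n2 ∧ p2 ≤ n1 ∧ q2 ≤ n2 ∧
        s1 ≤ n1 ∧ t1 ≤ n2 ∧ s2 ≤ n1 ∧ t2 ≤ n2 ∧
        ShiftMinWin p1 q1 ∧ ShiftMinWin p2 q2 ∧
        ¬ Win s1 t1 ∧ ¬ Win s2 t2 ∧
        p1 + p2 = s1 + s2 ∧ q1 + q2 = t1 + t2 by
    exact H (2 * (a1 + a2) + (b1 + b2)) a1 b1 a2 b2 u1 v1 u2 v2 le_rfl hba1 hbb1
      hba2 hbb2 hbu1 hbv1 hbu2 hbv2 ((hMinWin a1 b1).1 hw1).1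
      ((hMinWin a2 b2).1 hw2).1 hl1 hl2 hsum1 hsum2
  intro M
  induction M using Nat.strong_induction_on with
  | _ M IH =>
  have key : ∀ p1 q1 p2 q2 s1 t1 s2 t2 : ℕ,
      2 * (p1 + p2) + (q1 + q2) ≤ M →
      p1 ≤ n1 → q1 ≤ n2 → p2 ≤ n1 → q2 ≤ n2 →
      s1 ≤ n1 → t1 ≤ n2 → s2 ≤ n1 → t2 ≤ n2 →
      Win p1 q1 → Win p2 q2 → ¬ Win s1 t1 → ¬ Win s2 t2 →
      p1 + p2 = s1 + s2 → q1 + q2 = t1 + t2 →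
      ¬ ShiftMinWin p1 q1 →
      ∃ p1 q1 p2 q2 s1 t1 s2 t2 : ℕ,
        p1 ≤ n1 ∧ q1 ≤ n2 ∧ p2 ≤ n1 ∧ q2 ≤ n2 ∧
        s1 ≤ n1 ∧ t1 ≤ n2 ∧ s2 ≤ n1 ∧ t2 ≤ n2 ∧
        ShiftMinWin p1 q1 ∧ ShiftMinWin p2 q2 ∧
        ¬ Win s1 t1 ∧ ¬ Win s2 t2 ∧
        p1 + p2 = s1 + s2 ∧ q1 + q2 = t1 + t2 := by
    intro p1 q1 p2 q2 s1 t1 s2 t2 hM h1 h2 h3 h4 h5 h6 h7 h8 hW1 hW2 hL1 hL2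
      hs ht hns
    have hex : ∃ x' y', y' ≤ n2 ∧ x' ≤ p1 ∧ x' + y' ≤ p1 + q1 ∧
        (x' < p1 ∨ x' + y' < p1 + q1) ∧ Win x' y' := by
      by_contra hc
      push_neg at hc
      exact hns ((hShiftMinWin p1 q1).2 ⟨hW1, hc⟩)
    obtain ⟨x', y', hy', hx', hxy', hstrict, hw'⟩ := hex
    rcases Nat.lt_or_ge (x' + y') (p1 + q1) with hlt | hge
    · rcases Nat.eq_zero_or_pos q1 with hq0 | hq1
      · have hp1 : 1 ≤ p1 := by omega
        have hWnew : Win (p1 - 1) q1 :=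
          hupset (p1 - 1) q1 x' y' (by omega) h2 (by omega) (by omega) hw'
        obtain ⟨s1', s2', hs1', hs2', hL1', hL2', hss⟩ :=
          decS s1 t1 s2 t2 h5 h6 h7 h8 hL1 hL2 (by omega)
        exact IH (2 * ((p1 - 1) + p2) + (q1 + q2)) (by omega) (p1 - 1) q1 p2 q2
          s1' t1 s2' t2 le_rfl (by omega) h2 h3 h4 hs1' h6 hs2' h8 hWnew hW2
          hL1' hL2' (by omega) (by omega)
      · have hWnew : Win p1 (q1 - 1) :=
          hupset p1 (q1 - 1) x' y' h1 (by omega) hx' (by omega) hw'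
        obtain ⟨t1', t2', ht1', ht2', hL1', hL2', htt⟩ :=
          decT s1 t1 s2 t2 h5 h6 h7 h8 hL1 hL2 (by omega)
        exact IH (2 * (p1 + p2) + ((q1 - 1) + q2)) (by omega) p1 (q1 - 1) p2 q2
          s1 t1' s2 t2' le_rfl h1 (by omega) h3 h4 h5 ht1' h7 ht2' hWnew hW2
          hL1' hL2' hs (by omega)
    · have hxlt : x' < p1 := by
        rcases hstrict with h | h
        · exact h
        · omega
      rcases Nat.lt_or_ge q1 n2 with hq | hq
      · have hWnew : Win (p1 - 1) (q1 + 1) :=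
          hupset (p1 - 1) (q1 + 1) x' y' (by omega) (by omega) (by omega)
            (by omega) hw'
        obtain ⟨s1', t1', s2', t2', b1', b2', b3', b4', hL1', hL2', hss, htt⟩ :=
          shiftL s1 t1 s2 t2 h5 h6 h7 h8 hL1 hL2 (by omega) (by omega)
        exact IH (2 * ((p1 - 1) + p2) + ((q1 + 1) + q2)) (by omega) (p1 - 1)
          (q1 + 1) p2 q2 s1' t1' s2' t2' le_rfl (by omega) (by omega) h3 h4
          b1' b2' b3' b4' hWnew hW2 hL1' hL2' (by omega) (by omega)
      · have hWnew : Win (p1 - 1) q1 :=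
          hupset (p1 - 1) q1 x' y' (by omega) h2 (by omega) (by omega) hw'
        obtain ⟨s1', s2', hs1', hs2', hL1', hL2', hss⟩ :=
          decS s1 t1 s2 t2 h5 h6 h7 h8 hL1 hL2 (by omega)
        exact IH (2 * ((p1 - 1) + p2) + (q1 + q2)) (by omega) (p1 - 1) q1 p2 q2
          s1' t1 s2' t2 le_rfl (by omega) h2 h3 h4 hs1' h6 hs2' h8 hWnew hW2
          hL1' hL2' (by omega) (by omega)
  intro p1 q1 p2 q2 s1 t1 s2 t2 hM h1 h2 h3 h4 h5 h6 h7 h8 hW1 hW2 hL1 hL2 hs ht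
  by_cases hS1 : ShiftMinWin p1 q1
  · by_cases hS2 : ShiftMinWin p2 q2
    · exact ⟨p1, q1, p2, q2, s1, t1, s2, t2, h1, h2, h3, h4, h5, h6, h7, h8,
        hS1, hS2, hL1, hL2, hs, ht⟩
    · exact key p2 q2 p1 q1 s2 t2 s1 t1 (by omega) h3 h4 h1 h2 h7 h8 h5 h6
        hW2 hW1 hL2 hL1 (by omega) (by omega) hS2
  · exact key p1 q1 p2 q2 s1 t1 s2 t2 hM h1 h2 h3 h4 h5 h6 h7 h8 hW1 hW2
      hL1 hL2 hs ht hS1
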